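/- arXiv:2510.03338 — 9 statements merged into one kernel-verified Lean document; each statement's English description precedes it below -/
import Mathlib

section
/- Let α > 0, μ ∈ ℝ, σ > 0 and ξ ∈ ℝ with ξ ≠ 0 and ξ > −(1+α)/α. Then the integral of f(x; μ,σ,ξ)^{1+α} over the support D is finite and equals σ^{−α} · (1/(1+α))^{α(ξ+1)+1} · Γ(α(ξ+1)+1), where Γ is the Gamma function. -/
open MeasureTheory Real

/-- The Generalized Extreme-Value (GEV) density with shape `ξ ≠ 0`:
`f(x; μ,σ,ξ) = (1/σ) t(x)^{-(ξ+1)/ξ} exp(-t(x)^{-1/ξ})` on the support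
`D = {x | t(x) > 0}` where `t(x) = 1 + ξ (x-μ)/σ`, and `0` otherwise. -/
noncomputable def gevDensity (μ σ ξ x : ℝ) : ℝ :=
  if 0 < 1 + ξ * ((x - μ) / σ) then
    σ⁻¹ * (1 + ξ * ((x - μ) / σ)) ^ (-(ξ + 1) / ξ) *
      Real.exp (-((1 + ξ * ((x - μ) / σ)) ^ (-1 / ξ)))
  else 0

theorem stmt_0 (α μ σ ξ : ℝ) (hα : 0 < α) (hσ : 0 < σ) (hξ0 : ξ ≠ 0)
    (hξ : ξ > -(1 + α) / α) :
    IntegrableOn (fun x => gevDensity μ σ ξ x ^ (1 + α))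
      {x : ℝ | 0 < 1 + ξ * ((x - μ) / σ)} ∧
    ∫ x in {x : ℝ | 0 < 1 + ξ * ((x - μ) / σ)}, gevDensity μ σ ξ x ^ (1 + α) =
      σ ^ (-α) * (1 / (1 + α)) ^ (α * (ξ + 1) + 1) * Real.Gamma (α * (ξ + 1) + 1) := by
  set g : ℝ → ℝ := fun y => μ + σ * (y ^ (-ξ) - 1) / ξ with hg
  have hαξ : -1 < α * (ξ + 1) := by
    have h1 : -(1 + α) < ξ * α := by
      rw [gt_iff_lt, div_lt_iff₀ hα] at hξ; linarith
    nlinarith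
  -- t(g y) = y ^ (-ξ)
  have ht : ∀ y : ℝ, 1 + ξ * ((g y - μ) / σ) = y ^ (-ξ) := by
    intro y
    simp only [hg]
    field_simp
    ring
  -- derivative
  have hderiv : ∀ y ∈ Set.Ioi (0:ℝ),
      HasDerivWithinAt g (-σ * y ^ (-ξ - 1)) (Set.Ioi 0) y := by
    intro y hy
    have h1 : HasDerivAt (fun y : ℝ => y ^ (-ξ)) (-ξ * y ^ (-ξ - 1)) y :=
      Real.hasDerivAt_rpow_const (Or.inl (ne_of_gt hy))
    have h2 : HasDerivAt g (σ * (-ξ * y ^ (-ξ - 1)) / ξ) y := by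
      simpa [hg] using (((h1.sub_const 1).const_mul σ).div_const ξ).const_add μ
    have h3 : σ * (-ξ * y ^ (-ξ - 1)) / ξ = -σ * y ^ (-ξ - 1) := by
      field_simp
    rw [h3] at h2
    exact h2.hasDerivWithinAt
  -- injectivity
  have hinj : Set.InjOn g (Set.Ioi 0) := by
    intro a ha b hb hab
    have hi := Real.rpow_left_injOn (x := -ξ) (neg_ne_zero.mpr hξ0)
      (show a ∈ {y : ℝ | 0 ≤ y} from le_of_lt (show (0:ℝ) < a from ha)) (show b ∈ {y : ℝ | 0 ≤ y} from le_of_lt (show (0:ℝ) < b from hb))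
    simp only at hi
    apply hi
    have h : σ * (a ^ (-ξ) - 1) / ξ = σ * (b ^ (-ξ) - 1) / ξ := by
      have := hab
      simp only [hg, add_right_inj] at this
      exact this
    field_simp at h
    linarith
  -- image
  have himg : g '' Set.Ioi 0 = {x : ℝ | 0 < 1 + ξ * ((x - μ) / σ)} := by
    ext x
    constructor
    · rintro ⟨y, hy, rfl⟩
      simp only [Set.mem_setOf_eq, ht y]
      exact Real.rpow_pos_of_pos hy _
    · intro hx
      simp only [Set.mem_setOf_eq] at hx
      refine ⟨(1 + ξ * ((x - μ) / σ)) ^ (-1/ξ), Real.rpow_pos_of_pos hx _, ?_⟩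
      have h1 : ((1 + ξ * ((x - μ) / σ)) ^ (-1/ξ)) ^ (-ξ) = 1 + ξ * ((x - μ) / σ) := by
        rw [← Real.rpow_mul (le_of_lt hx), show -1/ξ * (-ξ) = 1 by field_simp, Real.rpow_one]
      simp only [hg, h1]
      field_simp
      ring
  -- pointwise simplification
  have hpt : ∀ y ∈ Set.Ioi (0:ℝ),
      |(-σ * y ^ (-ξ - 1))| • (gevDensity μ σ ξ (g y)) ^ (1 + α)
        = σ ^ (-α) * (y ^ (α * (ξ + 1)) * Real.exp (-(1 + α) * y)) := by
    intro y hy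
    have hy0 : (0:ℝ) < y := hy
    have htpos : 0 < 1 + ξ * ((g y - μ) / σ) := by
      rw [ht y]; exact Real.rpow_pos_of_pos hy0 _
    have e1 : (y ^ (-ξ)) ^ (-(ξ + 1) / ξ) = y ^ (ξ + 1) := by
      rw [← Real.rpow_mul (le_of_lt hy0), show -ξ * (-(ξ + 1) / ξ) = ξ + 1 by field_simp]
    have e2 : (y ^ (-ξ)) ^ (-1 / ξ) = y := by
      rw [← Real.rpow_mul (le_of_lt hy0), show -ξ * (-1 / ξ) = 1 by field_simp, Real.rpow_one]
    have hd : gevDensity μ σ ξ (g y) = σ⁻¹ * y ^ (ξ + 1) * Real.exp (-y) := by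
      rw [gevDensity, if_pos htpos, ht y, e1, e2]
    rw [hd]
    have habs : |(-σ * y ^ (-ξ - 1))| = σ * y ^ (-ξ - 1) := by
      rw [abs_of_neg]
      · ring
      · have := Real.rpow_pos_of_pos hy0 (-ξ - 1)
        nlinarith
    rw [habs, smul_eq_mul]
    have h1α : (0:ℝ) ≤ 1 + α := by linarith
    rw [Real.mul_rpow (by positivity) (Real.exp_pos _).le,
        Real.mul_rpow (by positivity) (Real.rpow_nonneg hy0.le _),
        ← Real.exp_mul, ← Real.rpow_mul hy0.le,
        Real.inv_rpow hσ.le, ← Real.rpow_neg hσ.le]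
    have hσc : σ * σ ^ (-(1 + α)) = σ ^ (-α) := by
      rw [show (-α) = 1 + -(1 + α) by ring, Real.rpow_add hσ, Real.rpow_one]
    have hyc : y ^ (-ξ - 1) * y ^ ((ξ + 1) * (1 + α)) = y ^ (α * (ξ + 1)) := by
      rw [← Real.rpow_add hy0]; ring_nf
    calc σ * y ^ (-ξ - 1) * (σ ^ (-(1 + α)) * y ^ ((ξ + 1) * (1 + α)) * rexp (-y * (1 + α)))
        = (σ * σ ^ (-(1 + α))) * (y ^ (-ξ - 1) * y ^ ((ξ + 1) * (1 + α))) *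
            rexp (-y * (1 + α)) := by ring
      _ = σ ^ (-α) * (y ^ (α * (ξ + 1)) * rexp (-(1 + α) * y)) := by
          rw [hσc, hyc, show -y * (1 + α) = -(1 + α) * y by ring]; ring
  -- base integrability
  have base : IntegrableOn (fun y : ℝ => y ^ (α * (ξ + 1)) * Real.exp (-(1 + α) * y))
      (Set.Ioi 0) := by
    have := integrableOn_rpow_mul_exp_neg_mul_rpow hαξ (show (0:ℝ) < 1 by norm_num)
      (show (0:ℝ) < 1 + α by linarith)
    simpa [Real.rpow_one] using this
  have keyInt := MeasureTheory.integrableOn_image_iff_integrableOn_abs_deriv_smul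
    measurableSet_Ioi hderiv hinj (fun x => gevDensity μ σ ξ x ^ (1 + α))
  have key := MeasureTheory.integral_image_eq_integral_abs_deriv_smul
    measurableSet_Ioi hderiv hinj (fun x => gevDensity μ σ ξ x ^ (1 + α))
  rw [himg] at keyInt key
  constructor
  · rw [keyInt]
    exact MeasureTheory.IntegrableOn.congr_fun (base.const_mul (σ ^ (-α)))
      (fun y hy => (hpt y hy).symm) measurableSet_Ioi
  · rw [key, setIntegral_congr_fun measurableSet_Ioi hpt,
      MeasureTheory.integral_const_mul]
    have hval : ∫ y in Set.Ioi (0:ℝ), y ^ (α * (ξ + 1)) * Real.exp (-(1 + α) * y)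
        = (1 / (1 + α)) ^ (α * (ξ + 1) + 1) * Real.Gamma (α * (ξ + 1) + 1) := by
      have := Real.integral_rpow_mul_exp_neg_mul_Ioi
        (show (0:ℝ) < α * (ξ + 1) + 1 by linarith)
        (show (0:ℝ) < 1 + α by linarith)
      rw [← this]
      refine setIntegral_congr_fun measurableSet_Ioi (fun y hy => ?_)
      rw [add_sub_cancel_right, neg_mul]
    rw [hval, mul_assoc]
end

section
/- Let μ ∈ ℝ, σ > 0 and ξ ≠ 0, and let x be in the interior of the support D. Then the negative second partial derivative of log f(x; μ,σ,ξ) with respect to μ twice equals ((ξ+1)/σ²) · t(x)^{−2} · (t(x)^{−1/ξ} − ξ). -/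
open Real

lemma t_hasDerivAt (σ ξ x m : ℝ) :
    HasDerivAt (fun m' : ℝ => 1 + ξ * ((x - m') / σ)) (-(ξ / σ)) m := by
  have h : HasDerivAt (fun m' : ℝ => 1 + ξ * ((x - m') / σ))
      (ξ * (-1 / σ)) m := by
    have := (((hasDerivAt_id m).const_sub x).div_const σ).const_mul ξ
    simpa using this.const_add 1
  convert h using 1; ring

lemma log_gev_eq (σ ξ x m : ℝ) (hσ : 0 < σ)
    (hm : 0 < 1 + ξ * ((x - m) / σ)) :
    Real.log (gevDensity m σ ξ x) =
      -Real.log σ + (-(ξ + 1) / ξ) * Real.log (1 + ξ * ((x - m) / σ))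
        - (1 + ξ * ((x - m) / σ)) ^ (-1 / ξ) := by
  set t := 1 + ξ * ((x - m) / σ) with ht
  have h1 : gevDensity m σ ξ x = σ⁻¹ * t ^ (-(ξ + 1) / ξ) * Real.exp (-(t ^ (-1 / ξ))) := by
    unfold gevDensity; exact if_pos hm
  rw [h1, Real.log_mul (by positivity) (Real.exp_ne_zero _),
    Real.log_mul (by positivity) (by positivity), Real.log_exp,
    Real.log_rpow hm, Real.log_inv]
  ring

lemma log_gev_hasDerivAt (σ ξ x m : ℝ) (hσ : 0 < σ) (hξ : ξ ≠ 0)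
    (hm : 0 < 1 + ξ * ((x - m) / σ)) :
    HasDerivAt (fun m' : ℝ => Real.log (gevDensity m' σ ξ x))
      ((ξ + 1) / σ * (1 + ξ * ((x - m) / σ))⁻¹
        - σ⁻¹ * (1 + ξ * ((x - m) / σ)) ^ (-1 / ξ - 1)) m := by
  have hopen : IsOpen {m' : ℝ | 0 < 1 + ξ * ((x - m') / σ)} :=
    isOpen_lt continuous_const (by fun_prop)
  have hmem : {m' : ℝ | 0 < 1 + ξ * ((x - m') / σ)} ∈ nhds m := hopen.mem_nhds hm
  have heq : (fun m' : ℝ => Real.log (gevDensity m' σ ξ x)) =ᶠ[nhds m]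
      (fun m' : ℝ => -Real.log σ + (-(ξ + 1) / ξ) * Real.log (1 + ξ * ((x - m') / σ))
        - (1 + ξ * ((x - m') / σ)) ^ (-1 / ξ)) := by
    filter_upwards [hmem] with m' hm' using log_gev_eq σ ξ x m' hσ hm'
  have ht := t_hasDerivAt σ ξ x m
  have hlog : HasDerivAt (fun m' : ℝ => Real.log (1 + ξ * ((x - m') / σ)))
      (-(ξ / σ) / (1 + ξ * ((x - m) / σ))) m := ht.log (ne_of_gt hm)
  have hpow : HasDerivAt (fun m' : ℝ => (1 + ξ * ((x - m') / σ)) ^ (-1 / ξ))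
      (-(ξ / σ) * (-1 / ξ) * (1 + ξ * ((x - m) / σ)) ^ (-1 / ξ - 1)) m :=
    ht.rpow_const (Or.inl (ne_of_gt hm))
  have h := ((hlog.const_mul (-(ξ + 1) / ξ)).const_add (-Real.log σ)).sub hpow
  refine HasDerivAt.congr_of_eventuallyEq ?_ heq
  convert h using 1
  · rfl
  have ht' : (1 + ξ * ((x - m) / σ)) ≠ 0 := ne_of_gt hm
  generalize (1 + ξ * ((x - m) / σ)) ^ (-1 / ξ - 1) = A
  set T := 1 + ξ * ((x - m) / σ) with hT
  clear_value T
  field_simp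

lemma hval_aux (σ ξ t : ℝ) (hσ : 0 < σ) (hξ : ξ ≠ 0) (hx : 0 < t) :
    (ξ + 1) / σ * (-(-(ξ / σ)) / t ^ 2)
        - σ⁻¹ * (-(ξ / σ) * (-1 / ξ - 1) * (t ^ (-1 / ξ) * (t ^ 2)⁻¹))
      = -(((ξ + 1) / σ ^ 2) * (t⁻¹) ^ 2 * (t ^ (-1 / ξ) - ξ)) := by
  have ht' : t ≠ 0 := ne_of_gt hx
  generalize t ^ (-1 / ξ) = B
  field_simp
  ring

/-- The negative second partial derivative of `log f(x; μ,σ,ξ)` with respect to `μ` twice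
equals `((ξ+1)/σ²) t(x)⁻² (t(x)^{-1/ξ} - ξ)`: i.e. the derivative in `μ` of
`m ↦ ∂/∂μ log f(x; m,σ,ξ)` equals the negative of that quantity. -/
theorem stmt_5 (μ σ ξ x : ℝ) (hσ : 0 < σ) (hξ : ξ ≠ 0)
    (hx : 0 < 1 + ξ * ((x - μ) / σ)) :
    HasDerivAt (fun m : ℝ => deriv (fun m' : ℝ => Real.log (gevDensity m' σ ξ x)) m)
      (-(((ξ + 1) / σ ^ 2) * ((1 + ξ * ((x - μ) / σ))⁻¹) ^ 2 *
        ((1 + ξ * ((x - μ) / σ)) ^ (-1 / ξ) - ξ))) μ := by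
  have hopen : IsOpen {m' : ℝ | 0 < 1 + ξ * ((x - m') / σ)} :=
    isOpen_lt continuous_const (by fun_prop)
  have hmem : {m' : ℝ | 0 < 1 + ξ * ((x - m') / σ)} ∈ nhds μ := hopen.mem_nhds hx
  set g : ℝ → ℝ := fun m => (ξ + 1) / σ * (1 + ξ * ((x - m) / σ))⁻¹
    - σ⁻¹ * (1 + ξ * ((x - m) / σ)) ^ (-1 / ξ - 1) with hg
  have heq : (fun m : ℝ => deriv (fun m' : ℝ => Real.log (gevDensity m' σ ξ x)) m)
      =ᶠ[nhds μ] g := by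
    filter_upwards [hmem] with m hm
    exact (log_gev_hasDerivAt σ ξ x m hσ hξ hm).deriv
  have ht := t_hasDerivAt σ ξ x μ
  set t := 1 + ξ * ((x - μ) / σ) with htdef
  have hinv : HasDerivAt (fun m : ℝ => (1 + ξ * ((x - m) / σ))⁻¹)
      (-(-(ξ / σ)) / t ^ 2) μ := ht.inv (ne_of_gt hx)
  have hpow : HasDerivAt (fun m : ℝ => (1 + ξ * ((x - m) / σ)) ^ (-1 / ξ - 1))
      (-(ξ / σ) * (-1 / ξ - 1) * t ^ (-1 / ξ - 1 - 1)) μ :=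
    ht.rpow_const (Or.inl (ne_of_gt hx))
  have hgder : HasDerivAt g
      ((ξ + 1) / σ * (-(-(ξ / σ)) / t ^ 2)
        - σ⁻¹ * (-(ξ / σ) * (-1 / ξ - 1) * t ^ (-1 / ξ - 1 - 1))) μ :=
    (hinv.const_mul _).sub (hpow.const_mul _)
  have hval : (ξ + 1) / σ * (-(-(ξ / σ)) / t ^ 2)
        - σ⁻¹ * (-(ξ / σ) * (-1 / ξ - 1) * t ^ (-1 / ξ - 1 - 1))
      = -(((ξ + 1) / σ ^ 2) * (t⁻¹) ^ 2 * (t ^ (-1 / ξ) - ξ)) := by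
    have h2 : t ^ (-1 / ξ - 1 - 1) = t ^ (-1 / ξ) * (t ^ 2)⁻¹ := by
      rw [show (-1 / ξ - 1 - 1 : ℝ) = -1 / ξ + (-2) by ring, Real.rpow_add hx,
        show ((-2 : ℝ)) = -((2 : ℕ) : ℝ) by norm_num, Real.rpow_neg hx.le,
        Real.rpow_natCast]
    rw [h2]
    exact hval_aux σ ξ t hσ hξ hx
  exact (hval ▸ hgder).congr_of_eventuallyEq heq
end

section
/- Let μ ∈ ℝ, σ > 0 and ξ ≠ 0, and let x be in the interior of the support D. Then the negative mixed second partial derivative of log f(x; μ,σ,ξ) with respect to μ and σ equals (1/σ²) · t(x)^{−2} · ( ξ + 1 + ((x−μ)/σ − 1) · t(x)^{−1/ξ} ). -/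
open Real

open Filter

lemma deriv_mu (μ s ξ x : ℝ) (hs : 0 < s) (hξ : ξ ≠ 0)
    (hx : 0 < 1 + ξ * ((x - μ) / s)) :
    deriv (fun m : ℝ => Real.log (gevDensity m s ξ x)) μ =
      (ξ + 1) / (s * (1 + ξ * ((x - μ) / s))) -
        (1 + ξ * ((x - μ) / s)) ^ (-1 / ξ - 1) / s := by
  simp only [gevDensity]
  have hcont : Continuous fun m : ℝ => 1 + ξ * ((x - m) / s) := by continuity
  have hopen : IsOpen {m : ℝ | 0 < 1 + ξ * ((x - m) / s)} :=
    isOpen_lt continuous_const hcont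
  have hT : HasDerivAt (fun m : ℝ => 1 + ξ * ((x - m) / s)) (ξ * (-1 / s)) μ := by
    have h1 : HasDerivAt (fun m : ℝ => x - m) (-1) μ := by
      simpa using (hasDerivAt_id μ).const_sub x
    exact ((h1.div_const s).const_mul ξ).const_add 1
  set t := 1 + ξ * ((x - μ) / s) with ht
  have hlog : HasDerivAt (fun m : ℝ => (-(ξ + 1) / ξ) * Real.log (1 + ξ * ((x - m) / s)))
      ((-(ξ + 1) / ξ) * ((ξ * (-1 / s)) / t)) μ := (hT.log hx.ne').const_mul _
  have hrpow : HasDerivAt (fun m : ℝ => (1 + ξ * ((x - m) / s)) ^ (-1 / ξ))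
      ((ξ * (-1 / s)) * (-1 / ξ) * t ^ (-1 / ξ - 1)) μ :=
    hT.rpow_const (Or.inl hx.ne')
  have hF : HasDerivAt (fun m : ℝ => -Real.log s +
      (-(ξ + 1) / ξ) * Real.log (1 + ξ * ((x - m) / s)) -
      (1 + ξ * ((x - m) / s)) ^ (-1 / ξ))
      ((-(ξ + 1) / ξ) * ((ξ * (-1 / s)) / t) - (ξ * (-1 / s)) * (-1 / ξ) * t ^ (-1 / ξ - 1)) μ :=
    (hlog.const_add _).sub hrpow
  have hev : (fun m : ℝ => Real.log (if 0 < 1 + ξ * ((x - m) / s) then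
      s⁻¹ * (1 + ξ * ((x - m) / s)) ^ (-(ξ + 1) / ξ) *
        Real.exp (-((1 + ξ * ((x - m) / s)) ^ (-1 / ξ))) else 0)) =ᶠ[nhds μ]
      (fun m : ℝ => -Real.log s +
      (-(ξ + 1) / ξ) * Real.log (1 + ξ * ((x - m) / s)) -
      (1 + ξ * ((x - m) / s)) ^ (-1 / ξ)) := by
    filter_upwards [hopen.mem_nhds hx] with m hm
    rw [if_pos hm, Real.log_mul (by positivity) (Real.exp_ne_zero _),
      Real.log_mul (by positivity) (by positivity), Real.log_exp, Real.log_inv,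
      Real.log_rpow hm]
    ring
  have hD := hF.congr_of_eventuallyEq hev
  rw [hD.deriv]
  have htne : t ≠ 0 := hx.ne'
  field_simp

set_option maxHeartbeats 1000000 in
/-- The negative mixed second partial derivative of `log f(x; μ,σ,ξ)` with respect to `μ`
and `σ` equals `(1/σ²) t(x)⁻² (ξ + 1 + ((x-μ)/σ - 1) t(x)^{-1/ξ})`: i.e. the derivative in
`σ` of `s ↦ ∂/∂μ log f(x; μ,s,ξ)` equals the negative of that quantity. -/
theorem stmt_6 (μ σ ξ x : ℝ) (hσ : 0 < σ) (hξ : ξ ≠ 0)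
    (hx : 0 < 1 + ξ * ((x - μ) / σ)) :
    HasDerivAt (fun s : ℝ => deriv (fun m : ℝ => Real.log (gevDensity m s ξ x)) μ)
      (-((1 / σ ^ 2) * ((1 + ξ * ((x - μ) / σ))⁻¹) ^ 2 *
        (ξ + 1 + ((x - μ) / σ - 1) * (1 + ξ * ((x - μ) / σ)) ^ (-1 / ξ)))) σ := by
  have hC : ContinuousAt (fun s : ℝ => 1 + ξ * ((x - μ) / s)) σ :=
    (continuousAt_const.add (continuousAt_const.mul
      (continuousAt_const.div continuousAt_id hσ.ne')))
  have hpos : ∀ᶠ s in nhds σ, 0 < 1 + ξ * ((x - μ) / s) :=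
    continuousAt_const.eventually_lt hC hx
  have hspos : ∀ᶠ s in nhds σ, 0 < s := eventually_gt_nhds hσ
  set t : ℝ := 1 + ξ * ((x - μ) / σ) with htdef
  have hT : HasDerivAt (fun s : ℝ => 1 + ξ * ((x - μ) / s))
      (ξ * ((x - μ) * (-(σ ^ 2)⁻¹))) σ := by
    have h0 : HasDerivAt (fun s : ℝ => s⁻¹) (-(σ ^ 2)⁻¹) σ := hasDerivAt_inv hσ.ne'
    simpa only [div_eq_mul_inv] using ((h0.const_mul (x - μ)).const_mul ξ).const_add 1
  have hdenne : σ * t ≠ 0 := by positivity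
  have hA : HasDerivAt (fun s : ℝ => (ξ + 1) / (s * (1 + ξ * ((x - μ) / s))))
      ((0 * (σ * t) - (ξ + 1) * (1 * t + σ * (ξ * ((x - μ) * (-(σ ^ 2)⁻¹))))) / (σ * t) ^ 2)
      σ := (hasDerivAt_const σ (ξ + 1)).div ((hasDerivAt_id σ).mul hT) hdenne
  have hB : HasDerivAt (fun s : ℝ => (1 + ξ * ((x - μ) / s)) ^ (-1 / ξ - 1) / s)
      (((ξ * ((x - μ) * (-(σ ^ 2)⁻¹))) * (-1 / ξ - 1) * t ^ (-1 / ξ - 1 - 1) * σ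
        - t ^ (-1 / ξ - 1) * 1) / σ ^ 2) σ :=
    (hT.rpow_const (Or.inl hx.ne')).div (hasDerivAt_id σ) hσ.ne'
  have hg := hA.sub hB
  have hev : (fun s : ℝ => deriv (fun m : ℝ => Real.log (gevDensity m s ξ x)) μ) =ᶠ[nhds σ]
      (fun s : ℝ => (ξ + 1) / (s * (1 + ξ * ((x - μ) / s))) -
        (1 + ξ * ((x - μ) / s)) ^ (-1 / ξ - 1) / s) := by
    filter_upwards [hpos, hspos] with s h1 h2
    exact deriv_mu μ s ξ x h2 hξ h1
  have hg' := hg.congr_of_eventuallyEq hev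
  refine hg'.congr_deriv ?_
  have e1 : t ^ (-1 / ξ - 1) = t ^ (-1 / ξ) / t := by
    rw [Real.rpow_sub hx, Real.rpow_one]
  have e2 : t ^ (-1 / ξ - 1 - 1) = t ^ (-1 / ξ) / t / t := by
    rw [Real.rpow_sub hx, Real.rpow_sub hx, Real.rpow_one]
  rw [e1, e2]
  have hxu : x - μ = (x - μ) / σ * σ := by field_simp
  rw [hxu]
  rw [mul_div_cancel_right₀ _ hσ.ne']
  clear_value t
  clear hg hg' hA hB hev hT hC hpos hspos hdenne e1 e2
  generalize hP : t ^ (-1 / ξ) = P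
  generalize hu : (x - μ) / σ = u at htdef ⊢
  subst htdef
  have hξu : 1 + ξ * u ≠ 0 := hx.ne'
  field_simp
  ring
end

section
/- Let μ ∈ ℝ, σ > 0 and ξ ≠ 0, and let x be in the interior of the support D. Then the negative mixed second partial derivative of log f(x; μ,σ,ξ) with respect to μ and ξ equals (1/σ) · t(x)^{−2} · ((x−μ)/σ − 1) + (1/(σξ²)) · t(x)^{−1/ξ − 2} · ( t(x) · log t(x) − ξ(ξ+1)(x−μ)/σ ). -/
open Real

lemma gev_deriv_mu (μ σ x : ℝ) (hσ : 0 < σ) {s : ℝ} (hs : s ≠ 0)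
    (ht : 0 < 1 + s * ((x - μ) / σ)) :
    deriv (fun m : ℝ => Real.log (gevDensity m σ s x)) μ =
      (s + 1) / (σ * (1 + s * ((x - μ) / σ))) -
        σ⁻¹ * (1 + s * ((x - μ) / σ)) ^ (-s⁻¹ - 1) := by
  set T : ℝ → ℝ := fun m => 1 + s * ((x - m) / σ) with hTdef
  have hTc : Continuous T := by fun_prop
  have hopen : IsOpen {m : ℝ | 0 < T m} := isOpen_lt continuous_const hTc
  have hmem : {m : ℝ | 0 < T m} ∈ nhds μ := hopen.mem_nhds ht
  set L : ℝ → ℝ := fun m =>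
    Real.log σ⁻¹ + (-(s + 1) / s * Real.log (T m)) + (-(T m ^ (-1 / s))) with hLdef
  have heq : (fun m : ℝ => Real.log (gevDensity m σ s x)) =ᶠ[nhds μ] L := by
    filter_upwards [hmem] with m hm
    have hb : (0:ℝ) < T m := hm
    simp only [gevDensity, hLdef]
    rw [if_pos hb, Real.log_mul (by positivity) (Real.exp_ne_zero _),
      Real.log_mul (by positivity) (by positivity), Real.log_exp, Real.log_rpow hb]
  -- derivative of T
  have hT' : HasDerivAt T (s * (-1 / σ)) μ := by
    have h1 : HasDerivAt (fun m : ℝ => x - m) (-1) μ := (hasDerivAt_id μ).const_sub x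
    have h2 := (h1.div_const σ).const_mul s
    exact h2.const_add 1
  have hTμ : T μ = 1 + s * ((x - μ) / σ) := rfl
  have hTne : T μ ≠ 0 := ne_of_gt ht
  have hlog : HasDerivAt (fun m => Real.log (T m)) (s * (-1 / σ) / T μ) μ := hT'.log hTne
  have hpow : HasDerivAt (fun m => T m ^ (-1 / s))
      (s * (-1 / σ) * (-1 / s) * T μ ^ (-1 / s - 1)) μ :=
    hT'.rpow_const (Or.inl hTne)
  have hL : HasDerivAt L
      (-(s + 1) / s * (s * (-1 / σ) / T μ) + (-(s * (-1 / σ) * (-1 / s) * T μ ^ (-1 / s - 1)))) μ := by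
    have h := ((hasDerivAt_const μ (Real.log σ⁻¹)).add (hlog.const_mul (-(s + 1) / s))).add hpow.neg
    rw [zero_add] at h
    exact h
  rw [heq.deriv_eq, hL.deriv]
  have hexp : (-1 : ℝ) / s - 1 = -s⁻¹ - 1 := by rw [neg_div, one_div]
  rw [hTμ, hexp]
  have hT0 : (1 + s * ((x - μ) / σ)) ≠ 0 := ne_of_gt ht
  have hpos : (0:ℝ) < s * x - s * μ + σ := by
    have h := mul_pos ht hσ
    have he : (1 + s * ((x - μ) / σ)) * σ = s * x - s * μ + σ := by field_simp; ring
    rw [he] at h; exact h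
  have hT0' : s * x - s * μ + σ ≠ 0 := ne_of_gt hpos
  generalize (1 + s * ((x - μ) / σ)) ^ (-s⁻¹ - 1 : ℝ) = A
  have hT0'' : σ + s * (x - μ) ≠ 0 := by
    rw [show σ + s * (x - μ) = s * x - s * μ + σ by ring]; exact hT0'
  field_simp
  ring

/-- The negative mixed second partial derivative of `log f(x; μ,σ,ξ)` with respect to `μ`
and `ξ` equals
`(1/σ) t(x)⁻² ((x-μ)/σ - 1) + (1/(σξ²)) t(x)^{-1/ξ-2} (t(x) log t(x) - ξ(ξ+1)(x-μ)/σ)`: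
i.e. the derivative in `ξ` of `s ↦ ∂/∂μ log f(x; μ,σ,s)` equals the negative of that
quantity. -/
theorem stmt_7 (μ σ ξ x : ℝ) (hσ : 0 < σ) (hξ : ξ ≠ 0)
    (hx : 0 < 1 + ξ * ((x - μ) / σ)) :
    HasDerivAt (fun s : ℝ => deriv (fun m : ℝ => Real.log (gevDensity m σ s x)) μ)
      (-((1 / σ) * ((1 + ξ * ((x - μ) / σ))⁻¹) ^ 2 * ((x - μ) / σ - 1) +
        (1 / (σ * ξ ^ 2)) * (1 + ξ * ((x - μ) / σ)) ^ (-1 / ξ - 2) *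
          ((1 + ξ * ((x - μ) / σ)) * Real.log (1 + ξ * ((x - μ) / σ)) -
            ξ * (ξ + 1) * ((x - μ) / σ)))) ξ := by
  set u : ℝ := (x - μ) / σ with hu
  set t : ℝ := 1 + ξ * u with htd
  set G : ℝ → ℝ := fun s =>
    (s + 1) / (σ * (1 + s * u)) - σ⁻¹ * (1 + s * u) ^ (-s⁻¹ - 1) with hGdef
  have h01 : IsOpen {s : ℝ | 0 < 1 + s * u} :=
    isOpen_lt continuous_const (continuous_const.add (continuous_id.mul continuous_const))
  have hmem1 : {s : ℝ | 0 < 1 + s * u} ∈ nhds ξ := h01.mem_nhds hx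
  have hmem2 : {s : ℝ | s ≠ 0} ∈ nhds ξ := isOpen_compl_singleton.mem_nhds hξ
  have heq : (fun s : ℝ => deriv (fun m : ℝ => Real.log (gevDensity m σ s x)) μ) =ᶠ[nhds ξ] G := by
    filter_upwards [hmem1, hmem2] with s hs1 hs2
    exact gev_deriv_mu μ σ x hσ hs2 hs1
  -- derivative of G at ξ
  have htpos : (0:ℝ) < t := hx
  have htne : t ≠ 0 := ne_of_gt htpos
  have hlin : HasDerivAt (fun s : ℝ => 1 + s * u) u ξ := by
    simpa using ((hasDerivAt_id ξ).mul_const u).const_add 1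
  have h1 : HasDerivAt (fun s : ℝ => (s + 1) / (σ * (1 + s * u)))
      ((1 * (σ * t) - (ξ + 1) * (σ * u)) / (σ * t) ^ 2) ξ := by
    exact ((hasDerivAt_id ξ).add_const 1).div (hlin.const_mul σ) (by positivity)
  have hexp : HasDerivAt (fun s : ℝ => -s⁻¹ - 1) ((ξ ^ 2)⁻¹) ξ := by
    simpa using ((hasDerivAt_inv hξ).neg).sub_const 1
  have h2 : HasDerivAt (fun s : ℝ => (1 + s * u) ^ (-s⁻¹ - 1))
      (u * (-ξ⁻¹ - 1) * t ^ (-ξ⁻¹ - 1 - 1) + (ξ ^ 2)⁻¹ * t ^ (-ξ⁻¹ - 1) * Real.log t) ξ :=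
    hlin.rpow hexp htpos
  have hG : HasDerivAt G
      ((1 * (σ * t) - (ξ + 1) * (σ * u)) / (σ * t) ^ 2 -
        σ⁻¹ * (u * (-ξ⁻¹ - 1) * t ^ (-ξ⁻¹ - 1 - 1) + (ξ ^ 2)⁻¹ * t ^ (-ξ⁻¹ - 1) * Real.log t)) ξ :=
    h1.sub (h2.const_mul σ⁻¹)
  refine HasDerivAt.congr_of_eventuallyEq ?_ heq
  convert hG using 1
  case e'_4 => rfl
  case e'_5 => rfl
  -- algebraic identity between the two derivative expressions
  have e1 : (-1 : ℝ) / ξ - 2 = -ξ⁻¹ - 1 - 1 := by rw [neg_div, one_div]; ring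
  have e2 : t ^ (-ξ⁻¹ - 1) = t ^ (-ξ⁻¹ - 1 - 1) * t := by
    rw [← Real.rpow_add_one htne]; ring_nf
  rw [e1, e2]
  set A := t ^ (-ξ⁻¹ - 1 - 1) with hA
  have hσne : σ ≠ 0 := ne_of_gt hσ
  field_simp
  ring
end

section
/- Let μ ∈ ℝ, σ > 0 and ξ ≠ 0, and let x be in the interior of the support D; write z = (x−μ)/σ. Then the negative second partial derivative of log f(x; μ,σ,ξ) with respect to σ twice equals (1/σ²) · z · t(x)^{−1/ξ − 2} · ((1−ξ)z − 2) + (1/σ²) · t(x)^{−2} · (ξz² + 2z − 1). -/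
open Real

lemma hasDerivAt_t' (c ξ s : ℝ) (hs : s ≠ 0) :
    HasDerivAt (fun s' : ℝ => 1 + ξ * (c / s')) (ξ * c * (-(s ^ 2)⁻¹)) s := by
  have h := ((hasDerivAt_inv hs).const_mul (ξ * c)).const_add 1
  convert h using 2 with s'
  · rfl
  · rfl
  ring

lemma Fderiv' (c ξ : ℝ) (hξ : ξ ≠ 0) (s : ℝ) (hs : 0 < s) (ht : 0 < 1 + ξ * (c / s)) :
    HasDerivAt (fun s' : ℝ => -Real.log s' + (-(ξ + 1) / ξ) * Real.log (1 + ξ * (c / s'))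
        - (1 + ξ * (c / s')) ^ (-1 / ξ))
      (-s⁻¹ + (ξ + 1) * c * ((s ^ 2)⁻¹ * (1 + ξ * (c / s))⁻¹)
        - c * (s ^ 2)⁻¹ * (1 + ξ * (c / s)) ^ (-1 / ξ - 1)) s := by
  have hT := hasDerivAt_t' c ξ s hs.ne'
  have h1 : HasDerivAt (fun s' : ℝ => -Real.log s') (-s⁻¹) s :=
    (Real.hasDerivAt_log hs.ne').neg
  have h2 := (hT.log ht.ne').const_mul (-(ξ + 1) / ξ)
  have h3 := hT.rpow_const (p := -1 / ξ) (Or.inl ht.ne')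
  have h := (h1.add h2).sub h3
  simp only [Pi.add_def, Pi.sub_def] at h
  convert h using 1
  · rfl
  · rfl
  set t := 1 + ξ * (c / s) with htt
  set A := t ^ (-1 / ξ - 1) with hA
  field_simp

lemma Gderiv' (c ξ : ℝ) (hξ : ξ ≠ 0) (σ : ℝ) (hs : 0 < σ) (ht : 0 < 1 + ξ * (c / σ)) :
    HasDerivAt (fun s : ℝ => -s⁻¹ + (ξ + 1) * c * ((s ^ 2)⁻¹ * (1 + ξ * (c / s))⁻¹)
        - c * (s ^ 2)⁻¹ * (1 + ξ * (c / s)) ^ (-1 / ξ - 1))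
      (-((1 / σ ^ 2) * (c / σ) * (1 + ξ * (c / σ)) ^ (-1 / ξ - 2) *
          ((1 - ξ) * (c / σ) - 2) +
        (1 / σ ^ 2) * ((1 + ξ * (c / σ))⁻¹) ^ 2 *
          (ξ * (c / σ) ^ 2 + 2 * (c / σ) - 1))) σ := by
  have hT := hasDerivAt_t' c ξ σ hs.ne'
  have hs2 : (σ : ℝ) ^ 2 ≠ 0 := pow_ne_zero 2 hs.ne'
  have hU : HasDerivAt (fun s' : ℝ => (s' ^ 2)⁻¹) (-(2 * σ) / (σ ^ 2) ^ 2) σ := by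
    have := (hasDerivAt_pow 2 σ).inv hs2
    simpa [Pi.inv_def] using this
  have h1 : HasDerivAt (fun s' : ℝ => -s'⁻¹) ((σ ^ 2)⁻¹) σ := by
    simpa [Pi.neg_def] using (hasDerivAt_inv hs.ne').neg
  have hTinv := hT.inv ht.ne'
  have h2 := (hU.mul hTinv).const_mul ((ξ + 1) * c)
  have hB := hT.rpow_const (p := -1 / ξ - 1) (Or.inl ht.ne')
  have h3 := (hU.mul hB).const_mul c
  have h := (h1.add h2).sub h3
  simp only [Pi.add_def, Pi.sub_def, Pi.mul_def, Pi.inv_def] at h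
  simp only [← mul_assoc] at h
  convert h using 1
  · rfl
  · rfl
  · funext s'; ring
  rw [show (-1 / ξ - 1 - 1 : ℝ) = -1 / ξ - 2 by ring,
    show ((1 + ξ * (c / σ)) ^ (-1 / ξ - 1) : ℝ)
      = (1 + ξ * (c / σ)) ^ (-1 / ξ - 2) * (1 + ξ * (c / σ)) by
        rw [← Real.rpow_add_one ht.ne']; ring_nf]
  set A := (1 + ξ * (c / σ)) ^ (-1 / ξ - 2 : ℝ) with hA
  have hne : σ + ξ * c ≠ 0 := by
    have h0 : σ * (1 + ξ * (c / σ)) = σ + ξ * c := by field_simp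
    have := mul_pos hs ht
    rw [h0] at this
    exact this.ne'
  have htE : 1 + ξ * (c / σ) = (σ + ξ * c) / σ := by field_simp
  have hne' : σ + c * ξ ≠ 0 := by rwa [mul_comm c ξ]
  rw [htE]
  field_simp
  ring

/-- With `z = (x-μ)/σ`, the negative second partial derivative of `log f(x; μ,σ,ξ)` with
respect to `σ` twice equals
`(1/σ²) z t(x)^{-1/ξ-2} ((1-ξ)z - 2) + (1/σ²) t(x)⁻² (ξz² + 2z - 1)`: i.e. the
derivative in `σ` of `s ↦ ∂/∂σ log f(x; μ,s,ξ)` equals the negative of that quantity. -/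
theorem stmt_8 (μ σ ξ x : ℝ) (hσ : 0 < σ) (hξ : ξ ≠ 0)
    (hx : 0 < 1 + ξ * ((x - μ) / σ)) :
    HasDerivAt (fun s : ℝ => deriv (fun s' : ℝ => Real.log (gevDensity μ s' ξ x)) s)
      (-((1 / σ ^ 2) * ((x - μ) / σ) * (1 + ξ * ((x - μ) / σ)) ^ (-1 / ξ - 2) *
          ((1 - ξ) * ((x - μ) / σ) - 2) +
        (1 / σ ^ 2) * ((1 + ξ * ((x - μ) / σ))⁻¹) ^ 2 *
          (ξ * ((x - μ) / σ) ^ 2 + 2 * ((x - μ) / σ) - 1))) σ := by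
  set c := x - μ with hc
  have hUopen : IsOpen {s : ℝ | 0 < s ∧ 0 < s + ξ * c} := by
    have h1 : IsOpen {s : ℝ | 0 < s} := isOpen_lt continuous_const continuous_id
    have h2 : IsOpen {s : ℝ | 0 < s + ξ * c} :=
      isOpen_lt continuous_const (continuous_id.add continuous_const)
    exact h1.inter h2
  have hσU : σ ∈ {s : ℝ | 0 < s ∧ 0 < s + ξ * c} := by
    refine ⟨hσ, ?_⟩
    have h0 : σ * (1 + ξ * (c / σ)) = σ + ξ * c := by field_simp
    have := mul_pos hσ hx
    rw [h0] at this; exact this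
  have hmem : {s : ℝ | 0 < s ∧ 0 < s + ξ * c} ∈ nhds σ := hUopen.mem_nhds hσU
  have hpos : ∀ s ∈ {s : ℝ | 0 < s ∧ 0 < s + ξ * c}, 0 < 1 + ξ * (c / s) := by
    intro s hs
    have h0 : 1 + ξ * (c / s) = (s + ξ * c) / s := by
      field_simp [hs.1.ne']
    rw [h0]
    exact div_pos hs.2 hs.1
  have hlog : ∀ s ∈ {s : ℝ | 0 < s ∧ 0 < s + ξ * c},
      Real.log (gevDensity μ s ξ x)
        = -Real.log s + (-(ξ + 1) / ξ) * Real.log (1 + ξ * (c / s))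
            - (1 + ξ * (c / s)) ^ (-1 / ξ) := by
    intro s hs
    have ht := hpos s hs
    rw [gevDensity, if_pos ht]
    rw [Real.log_mul
        (mul_ne_zero (inv_ne_zero hs.1.ne') (Real.rpow_pos_of_pos ht _).ne')
        (Real.exp_ne_zero _),
      Real.log_mul (inv_ne_zero hs.1.ne') (Real.rpow_pos_of_pos ht _).ne',
      Real.log_inv, Real.log_rpow ht, Real.log_exp]
    ring
  -- the first derivative equals g on U
  have hderiv : ∀ s ∈ {s : ℝ | 0 < s ∧ 0 < s + ξ * c},
      deriv (fun s' : ℝ => Real.log (gevDensity μ s' ξ x)) s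
        = -s⁻¹ + (ξ + 1) * c * ((s ^ 2)⁻¹ * (1 + ξ * (c / s))⁻¹)
            - c * (s ^ 2)⁻¹ * (1 + ξ * (c / s)) ^ (-1 / ξ - 1) := by
    intro s hs
    have heq : (fun s' : ℝ => Real.log (gevDensity μ s' ξ x))
        =ᶠ[nhds s] (fun s' : ℝ => -Real.log s' + (-(ξ + 1) / ξ) * Real.log (1 + ξ * (c / s'))
            - (1 + ξ * (c / s')) ^ (-1 / ξ)) := by
      filter_upwards [hUopen.mem_nhds hs] with s' hs' using hlog s' hs'
    rw [heq.deriv_eq, (Fderiv' c ξ hξ s hs.1 (hpos s hs)).deriv]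
  have hG := Gderiv' c ξ hξ σ hσ (hpos σ hσU)
  refine hG.congr_of_eventuallyEq ?_
  filter_upwards [hmem] with s hs using hderiv s hs
end

section
/- Let α > 0, μ ∈ ℝ and σ > 0, and write z(x) = (x−μ)/σ. Then the two functions x ↦ (1/σ)(1 − e^{−z(x)}) · f₀(x; μ,σ)^α and x ↦ (−1/σ + (z(x)/σ)(1 − e^{−z(x)})) · f₀(x; μ,σ)^α (the location and scale score components of the Gumbel model multiplied by f₀^α) are bounded on ℝ. -/
open Real

/-- The Gumbel density (GEV with shape `ξ = 0`):
`f₀(x; μ,σ) = (1/σ) exp(-z(x)) exp(-exp(-z(x)))` where `z(x) = (x-μ)/σ`. -/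
noncomputable def gumbelDensity (μ σ x : ℝ) : ℝ :=
  σ⁻¹ * Real.exp (-((x - μ) / σ)) * Real.exp (-Real.exp (-((x - μ) / σ)))

lemma aux1 (c d : ℝ) (hc : 0 < c) (hd : 0 < d) {t : ℝ} (ht : 0 < t) :
    t ^ c * Real.exp (-(d * t)) ≤ (c / d) ^ c := by
  have h1 : t * Real.exp (-(d / c * t)) ≤ c / d := by
    have he : d / c * t ≤ Real.exp (d / c * t) := by
      have := Real.add_one_le_exp (d / c * t); linarith
    have hep : 0 < Real.exp (d / c * t) := Real.exp_pos _
    rw [Real.exp_neg]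
    have ht2 : t ≤ c / d * Real.exp (d / c * t) := by
      have hcd : 0 < c / d := div_pos hc hd
      have h7 := mul_le_mul_of_nonneg_left he hcd.le
      have h8 : c / d * (d / c * t) = t := by field_simp
      linarith
    calc t * (Real.exp (d / c * t))⁻¹
        ≤ (c / d * Real.exp (d / c * t)) * (Real.exp (d / c * t))⁻¹ := by
          exact mul_le_mul_of_nonneg_right ht2 (by positivity)
      _ = c / d := by field_simp
  have key : t ^ c * Real.exp (-(d * t)) = (t * Real.exp (-(d / c * t))) ^ c := by
    rw [Real.mul_rpow ht.le (Real.exp_pos _).le, ← Real.exp_mul]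
    congr 2
    field_simp
  rw [key]
  exact Real.rpow_le_rpow (by positivity) h1 hc.le

lemma aux2 (c d : ℝ) (hc : 0 < c) (hd : 0 < d) {t : ℝ} (ht : 0 < t) :
    |Real.log t| * (t ^ c * Real.exp (-(d * t))) ≤ 1 / c + ((c + 1) / d) ^ (c + 1) := by
  have hpow : (0:ℝ) ≤ ((c + 1) / d) ^ (c + 1) := Real.rpow_nonneg (by positivity) _
  rcases le_total t 1 with h | h
  · have hlog : Real.log t ≤ 0 := Real.log_nonpos ht.le h
    have habs : |Real.log t| = -Real.log t := abs_of_nonpos hlog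
    have h2 : -Real.log t * t ^ c ≤ 1 / c := by
      have h3 : -Real.log t = (1 / c) * Real.log (t ^ (-c)) := by
        rw [Real.log_rpow ht]; field_simp
      have h4 : Real.log (t ^ (-c)) ≤ t ^ (-c) := by
        have := Real.log_le_sub_one_of_pos (show (0:ℝ) < t ^ (-c) by positivity)
        linarith
      have h5 : t ^ (-c) * t ^ c = 1 := by
        rw [← Real.rpow_add ht]; simp
      calc -Real.log t * t ^ c = (1 / c) * (Real.log (t ^ (-c)) * t ^ c) := by
            rw [h3]; ring
        _ ≤ (1 / c) * (t ^ (-c) * t ^ c) := by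
            apply mul_le_mul_of_nonneg_left
              (mul_le_mul_of_nonneg_right h4 (by positivity)) (by positivity)
        _ = 1 / c := by rw [h5]; ring
    have hexp : Real.exp (-(d * t)) ≤ 1 := by
      apply Real.exp_le_one_iff.mpr; nlinarith
    have htc : (0:ℝ) ≤ t ^ c := by positivity
    calc |Real.log t| * (t ^ c * Real.exp (-(d * t)))
        = (-Real.log t * t ^ c) * Real.exp (-(d * t)) := by rw [habs]; ring
      _ ≤ (1 / c) * 1 := by
          apply mul_le_mul h2 hexp (Real.exp_pos _).le (by positivity)
      _ ≤ 1 / c + ((c + 1) / d) ^ (c + 1) := by linarith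
  · have hlog : 0 ≤ Real.log t := Real.log_nonneg h
    have habs : |Real.log t| = Real.log t := abs_of_nonneg hlog
    have h2 : Real.log t ≤ t := by
      have := Real.log_le_sub_one_of_pos ht; linarith
    have h5 : t * t ^ c = t ^ (c + 1) := by
      rw [Real.rpow_add ht, Real.rpow_one]; ring
    have h6 : t ^ (c + 1) * Real.exp (-(d * t)) ≤ ((c + 1) / d) ^ (c + 1) :=
      aux1 (c + 1) d (by linarith) hd ht
    have hc1 : (0:ℝ) ≤ 1 / c := by positivity
    calc |Real.log t| * (t ^ c * Real.exp (-(d * t)))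
        = (Real.log t * t ^ c) * Real.exp (-(d * t)) := by rw [habs]; ring
      _ ≤ (t * t ^ c) * Real.exp (-(d * t)) := by
          apply mul_le_mul_of_nonneg_right
            (mul_le_mul_of_nonneg_right h2 (by positivity)) (Real.exp_pos _).le
      _ = t ^ (c + 1) * Real.exp (-(d * t)) := by rw [h5]
      _ ≤ ((c + 1) / d) ^ (c + 1) := h6
      _ ≤ 1 / c + ((c + 1) / d) ^ (c + 1) := by linarith

lemma density_pow (α μ σ : ℝ) (hσ : 0 < σ) (x : ℝ) :
    gumbelDensity μ σ x ^ α =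
      σ⁻¹ ^ α * (Real.exp (-((x - μ) / σ)) ^ α *
        Real.exp (-(α * Real.exp (-((x - μ) / σ))))) := by
  have h : Real.exp (-Real.exp (-((x - μ) / σ))) ^ α
      = Real.exp (-(α * Real.exp (-((x - μ) / σ)))) := by
    rw [← Real.exp_mul]; ring_nf
  unfold gumbelDensity
  rw [Real.mul_rpow (by positivity) (Real.exp_pos _).le,
      Real.mul_rpow (by positivity) (Real.exp_pos _).le, h, mul_assoc]

/-- The location and scale score components of the Gumbel model, multiplied by `f₀^α`,
are bounded on `ℝ`. -/
theorem stmt_11 (α μ σ : ℝ) (hα : 0 < α) (hσ : 0 < σ) :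
    (∃ C : ℝ, ∀ x : ℝ,
      |σ⁻¹ * (1 - Real.exp (-((x - μ) / σ))) * gumbelDensity μ σ x ^ α| ≤ C) ∧
    (∃ C : ℝ, ∀ x : ℝ,
      |(-σ⁻¹ + ((x - μ) / σ) / σ * (1 - Real.exp (-((x - μ) / σ)))) *
        gumbelDensity μ σ x ^ α| ≤ C) := by
  have hσi : 0 < σ⁻¹ := inv_pos.mpr hσ
  constructor
  · refine ⟨σ⁻¹ * σ⁻¹ ^ α * (1 + ((α + 1) / α) ^ (α + 1)), fun x => ?_⟩
    rw [density_pow α μ σ hσ x]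
    set t := Real.exp (-((x - μ) / σ)) with htdef
    have ht : 0 < t := Real.exp_pos _
    set X := t ^ α * Real.exp (-(α * t)) with hXdef
    have hX : 0 ≤ X := by positivity
    have e1 : X ≤ 1 := by
      have := aux1 α α hα hα ht
      rwa [div_self hα.ne', Real.one_rpow] at this
    have e2 : t * X ≤ ((α + 1) / α) ^ (α + 1) := by
      have h5 : t * X = t ^ (α + 1) * Real.exp (-(α * t)) := by
        rw [hXdef, Real.rpow_add ht, Real.rpow_one]; ring
      rw [h5]
      exact aux1 (α + 1) α (by linarith) hα ht
    have habs : |1 - t| ≤ 1 + t := by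
      rw [abs_le]; constructor <;> nlinarith
    have hD : 0 ≤ σ⁻¹ ^ α * X := mul_nonneg (Real.rpow_nonneg hσi.le _) hX
    calc |σ⁻¹ * (1 - t) * (σ⁻¹ ^ α * X)|
        = |1 - t| * (σ⁻¹ * (σ⁻¹ ^ α * X)) := by
          rw [abs_mul, abs_mul, abs_of_pos hσi, abs_of_nonneg hD]
          ring
      _ ≤ (1 + t) * (σ⁻¹ * (σ⁻¹ ^ α * X)) := by
          exact mul_le_mul_of_nonneg_right habs (by positivity)
      _ = σ⁻¹ * σ⁻¹ ^ α * (X + t * X) := by ring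
      _ ≤ σ⁻¹ * σ⁻¹ ^ α * (1 + ((α + 1) / α) ^ (α + 1)) := by
          apply mul_le_mul_of_nonneg_left _ (by positivity)
          linarith
  · refine ⟨σ⁻¹ * σ⁻¹ ^ α * (1 + (1 / α + ((α + 1) / α) ^ (α + 1)) +
      (1 / (α + 1) + ((α + 2) / α) ^ (α + 2))), fun x => ?_⟩
    rw [density_pow α μ σ hσ x]
    set z := (x - μ) / σ with hzdef
    set t := Real.exp (-z) with htdef
    have ht : 0 < t := Real.exp_pos _
    have hlt : Real.log t = -z := Real.log_exp _
    have hzabs : |z| = |Real.log t| := by rw [hlt, abs_neg]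
    set X := t ^ α * Real.exp (-(α * t)) with hXdef
    have hX : 0 ≤ X := by positivity
    have e1 : X ≤ 1 := by
      have := aux1 α α hα hα ht
      rwa [div_self hα.ne', Real.one_rpow] at this
    have f1 : |z| * X ≤ 1 / α + ((α + 1) / α) ^ (α + 1) := by
      rw [hzabs]; exact aux2 α α hα hα ht
    have f2 : |z| * (t * X) ≤ 1 / (α + 1) + ((α + 2) / α) ^ (α + 2) := by
      have h5 : t * X = t ^ (α + 1) * Real.exp (-(α * t)) := by
        rw [hXdef, Real.rpow_add ht, Real.rpow_one]; ring
      rw [hzabs, h5]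
      have := aux2 (α + 1) α (by linarith) hα ht
      calc |Real.log t| * (t ^ (α + 1) * Real.exp (-(α * t)))
          ≤ 1 / (α + 1) + ((α + 1 + 1) / α) ^ (α + 1 + 1) := this
        _ = 1 / (α + 1) + ((α + 2) / α) ^ (α + 2) := by
            rw [show α + 1 + 1 = α + 2 from by ring]
    have habs : |1 - t| ≤ 1 + t := by
      rw [abs_le]; constructor <;> nlinarith
    have h6 : |(-σ⁻¹ + z / σ * (1 - t))| ≤ σ⁻¹ + |z| * σ⁻¹ * (1 + t) := by
      calc |(-σ⁻¹ + z / σ * (1 - t))| ≤ |(-σ⁻¹)| + |z / σ * (1 - t)| := abs_add_le _ _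
        _ = σ⁻¹ + |z| * σ⁻¹ * |1 - t| := by
            rw [abs_neg, abs_of_pos hσi, abs_mul, abs_div, abs_of_pos hσ]
            ring
        _ ≤ σ⁻¹ + |z| * σ⁻¹ * (1 + t) := by
            have := mul_le_mul_of_nonneg_left habs (show (0:ℝ) ≤ |z| * σ⁻¹ by positivity)
            linarith
    have hin : X + |z| * X + |z| * (t * X) ≤
        1 + (1 / α + ((α + 1) / α) ^ (α + 1)) +
          (1 / (α + 1) + ((α + 2) / α) ^ (α + 2)) := by
      linarith
    have hD : 0 ≤ σ⁻¹ ^ α * X := mul_nonneg (Real.rpow_nonneg hσi.le _) hX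
    calc |(-σ⁻¹ + z / σ * (1 - t)) * (σ⁻¹ ^ α * X)|
        = |(-σ⁻¹ + z / σ * (1 - t))| * (σ⁻¹ ^ α * X) := by
          rw [abs_mul, abs_of_nonneg hD]
      _ ≤ (σ⁻¹ + |z| * σ⁻¹ * (1 + t)) * (σ⁻¹ ^ α * X) := by
          exact mul_le_mul_of_nonneg_right h6 (by positivity)
      _ = σ⁻¹ * σ⁻¹ ^ α * (X + |z| * X + |z| * (t * X)) := by ring
      _ ≤ σ⁻¹ * σ⁻¹ ^ α * (1 + (1 / α + ((α + 1) / α) ^ (α + 1)) +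
          (1 / (α + 1) + ((α + 2) / α) ^ (α + 2))) := by
          apply mul_le_mul_of_nonneg_left hin (by positivity)
end

section
/- Let μ ∈ ℝ, σ > 0 and ξ < 0. Then for every natural number k, the limit as x → −∞ of |x|^k · f(x; μ,σ,ξ) equals 0 (the GEV density with negative shape decays faster than any polynomial in its left tail). -/
open Real Filter

/-- For `ξ < 0`, the GEV density decays faster than any polynomial in its left tail:
for every natural `k`, `|x|^k f(x; μ,σ,ξ) → 0` as `x → -∞`. -/
theorem stmt_16 (μ σ ξ : ℝ) (hσ : 0 < σ) (hξ : ξ < 0) (k : ℕ) :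
    Tendsto (fun x : ℝ => |x| ^ k * gevDensity μ σ ξ x) atBot (nhds 0) := by
  set t : ℝ → ℝ := fun x => 1 + ξ * ((x - μ) / σ) with ht_def
  have hb : (0:ℝ) < -1 / ξ := div_pos_of_neg_of_neg (by norm_num) hξ
  set a : ℝ := -(ξ + 1) / ξ with ha_def
  set b : ℝ := -1 / ξ with hb_def
  set s : ℝ := k + a with hs_def
  set C : ℝ := |μ| + σ / (-ξ) with hC_def
  have hC0 : 0 ≤ C := add_nonneg (abs_nonneg _) (le_of_lt (div_pos hσ (neg_pos.mpr hξ)))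
  -- t tends to atTop as x → -∞
  have ht : Tendsto t atBot atTop := by
    have : Tendsto (fun x : ℝ => ξ / σ * x) atBot atTop :=
      Tendsto.const_mul_atBot_of_neg (div_neg_of_neg_of_pos hξ hσ) tendsto_id
    have h2 : Tendsto (fun x : ℝ => ξ / σ * x + (1 - ξ / σ * μ)) atBot atTop :=
      this.atTop_add tendsto_const_nhds
    refine h2.congr (fun x => ?_)
    simp only [ht_def]
    ring
  -- the dominating limit
  have hG : Tendsto (fun x => σ⁻¹ * C ^ k * ((t x ^ b) ^ (s / b) * Real.exp (-(1 * t x ^ b))))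
      atBot (nhds 0) := by
    have h1 : Tendsto (fun u : ℝ => u ^ (s / b) * Real.exp (-(1 * u))) atTop (nhds 0) := by
      simpa using tendsto_rpow_mul_exp_neg_mul_atTop_nhds_zero (s / b) 1 one_pos
    have h2 : Tendsto (fun x => t x ^ b) atBot atTop := (tendsto_rpow_atTop hb).comp ht
    have := (h1.comp h2).const_mul (σ⁻¹ * C ^ k)
    simpa using this
  apply tendsto_of_tendsto_of_tendsto_of_le_of_le' tendsto_const_nhds hG
  · filter_upwards with x
    unfold gevDensity
    split_ifs with h
    · positivity
    · simp
  · filter_upwards [eventually_le_atBot μ] with x hx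
    have htx1 : 1 ≤ t x := by
      have hd : (x - μ) / σ ≤ 0 := div_nonpos_of_nonpos_of_nonneg (by linarith) hσ.le
      have : 0 ≤ ξ * ((x - μ) / σ) := by nlinarith
      simp [ht_def]; linarith
    have htx0 : 0 < t x := lt_of_lt_of_le one_pos htx1
    have hxbound : |x| ≤ C * t x := by
      have h1 : μ - x = σ / (-ξ) * (t x - 1) := by
        have hσ' : σ ≠ 0 := hσ.ne'
        have hξ' : ξ ≠ 0 := hξ.ne
        simp only [ht_def]
        field_simp
        ring
      have h2 : |x| ≤ |μ| + (μ - x) := by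
        cases abs_cases x with
        | inl h => cases abs_cases μ with
          | inl h' => linarith [h.1, h'.1]
          | inr h' => linarith [h.1, h'.1]
        | inr h => cases abs_cases μ with
          | inl h' => linarith [h.1, h'.1]
          | inr h' => linarith [h.1, h'.1]
      have h3 : σ / (-ξ) * (t x - 1) ≤ σ / (-ξ) * t x := by
        have := le_of_lt (div_pos hσ (neg_pos.mpr hξ))
        nlinarith
      have h4 : |μ| ≤ |μ| * t x := le_mul_of_one_le_right (abs_nonneg _) htx1
      rw [h1] at h2
      calc |x| ≤ |μ| + σ / (-ξ) * (t x - 1) := h2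
        _ ≤ |μ| * t x + σ / (-ξ) * t x := add_le_add h4 h3
        _ = C * t x := by rw [hC_def]; ring
    have hgev : gevDensity μ σ ξ x = σ⁻¹ * t x ^ a * Real.exp (-(t x ^ b)) := by
      unfold gevDensity
      rw [if_pos htx0]
    rw [hgev]
    have hpow : |x| ^ k ≤ C ^ k * t x ^ (k:ℝ) := by
      calc |x| ^ k ≤ (C * t x) ^ k := pow_le_pow_left₀ (abs_nonneg _) hxbound k
        _ = C ^ k * t x ^ (k:ℝ) := by rw [mul_pow, ← rpow_natCast (t x) k]
    have hts : (t x ^ b) ^ (s / b) = t x ^ (k:ℝ) * t x ^ a := by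
      rw [← rpow_mul htx0.le, ← rpow_add htx0]
      congr 1
      rw [hs_def]
      field_simp
    rw [hts]
    have hexp : 0 < Real.exp (-(t x ^ b)) := Real.exp_pos _
    calc |x| ^ k * (σ⁻¹ * t x ^ a * Real.exp (-(t x ^ b)))
        ≤ C ^ k * t x ^ (k:ℝ) * (σ⁻¹ * t x ^ a * Real.exp (-(t x ^ b))) := by
          apply mul_le_mul_of_nonneg_right hpow
          positivity
      _ = σ⁻¹ * C ^ k * (t x ^ (k:ℝ) * t x ^ a * Real.exp (-(1 * t x ^ b))) := by
          rw [one_mul]; ring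
end

section
/- Let μ ∈ ℝ, σ > 0 and ξ > 0. Then the limit as x → +∞ of x^{(ξ+1)/ξ} · f(x; μ,σ,ξ) equals σ^{1/ξ} · ξ^{−(ξ+1)/ξ} (the GEV density with positive shape has a regularly varying right tail of index −(ξ+1)/ξ). -/
open Real Filter

/-- For `ξ > 0`, the GEV density has a regularly varying right tail of index `-(ξ+1)/ξ`:
`x^{(ξ+1)/ξ} f(x; μ,σ,ξ) → σ^{1/ξ} ξ^{-(ξ+1)/ξ}` as `x → +∞`. -/
theorem stmt_18 (μ σ ξ : ℝ) (hσ : 0 < σ) (hξ : 0 < ξ) :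
    Tendsto (fun x : ℝ => x ^ ((ξ + 1) / ξ) * gevDensity μ σ ξ x) atTop
      (nhds (σ ^ (1 / ξ) * ξ ^ (-(ξ + 1) / ξ))) := by
  have hξ' : ξ ≠ 0 := hξ.ne'
  have hσ' : σ ≠ 0 := hσ.ne'
  set a : ℝ := (ξ + 1) / ξ with ha
  set t : ℝ → ℝ := fun x => 1 + ξ * ((x - μ) / σ) with htdef
  have hσξ : (0:ℝ) < σ / ξ := div_pos hσ hξ
  -- t → ∞
  have ht : Tendsto t atTop atTop := by
    apply tendsto_atTop_add_const_left
    exact (Tendsto.atTop_div_const hσ (tendsto_atTop_add_const_right _ (-μ)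
      tendsto_id)).const_mul_atTop hξ |>.congr (by
        intro x; simp only [id_eq]; ring)
  -- exp part
  have he : Tendsto (fun x => Real.exp (-(t x) ^ (-1 / ξ))) atTop (nhds 1) := by
    have h0 : Tendsto (fun x => (t x) ^ (-(1/ξ))) atTop (nhds 0) :=
      (tendsto_rpow_neg_atTop (by positivity)).comp ht
    have h0n : Tendsto (fun x => -(t x ^ (-(1/ξ)))) atTop (nhds 0) := by
      simpa using h0.neg
    have := (Real.continuous_exp.tendsto 0).comp h0n
    simpa [neg_div, Function.comp_def] using this
  -- ratio part
  have hr : Tendsto (fun x => x / t x) atTop (nhds (σ / ξ)) := by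
    have h1 : Tendsto (fun x : ℝ => (1 - ξ * μ / σ) * x⁻¹ + ξ / σ) atTop
        (nhds (ξ / σ)) := by
      have := (tendsto_inv_atTop_zero :
        Tendsto (fun x : ℝ => x⁻¹) atTop (nhds 0)).const_mul (1 - ξ * μ / σ)
      simpa using this.add_const (ξ / σ)
    have h2 : Tendsto (fun x => t x / x) atTop (nhds (ξ / σ)) := by
      refine h1.congr' ?_
      filter_upwards [eventually_gt_atTop 0] with x hx
      field_simp [htdef]
      simp only [htdef]
      linear_combination (-(ξ * (x - μ))) * mul_inv_cancel₀ hσ'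
    have h3 := h2.inv₀ (div_ne_zero hξ' hσ')
    simpa [inv_div] using h3
  -- power part
  have hp : Tendsto (fun x => (x / t x) ^ a) atTop (nhds ((σ / ξ) ^ a)) :=
    ((Real.continuousAt_rpow_const _ _ (Or.inl hσξ.ne')).tendsto).comp hr
  -- combination
  have hmain : Tendsto (fun x => σ⁻¹ * (x / t x) ^ a * Real.exp (-(t x) ^ (-1 / ξ)))
      atTop (nhds (σ⁻¹ * (σ / ξ) ^ a * 1)) :=
    ((hp.const_mul σ⁻¹).mul he)
  have hval : σ⁻¹ * (σ / ξ) ^ a * 1 = σ ^ (1 / ξ) * ξ ^ (-(ξ + 1) / ξ) := by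
    rw [mul_one, Real.div_rpow hσ.le hξ.le, neg_div, ← ha, Real.rpow_neg hξ.le]
    rw [div_eq_mul_inv, ← mul_assoc]
    congr 1
    rw [← Real.rpow_neg_one σ, ← Real.rpow_add hσ]
    congr 1
    rw [ha]
    field_simp
    ring
  rw [← hval]
  refine hmain.congr' ?_
  filter_upwards [ht.eventually (eventually_gt_atTop 0), eventually_gt_atTop 0]
    with x htx hx
  have : gevDensity μ σ ξ x = σ⁻¹ * (t x) ^ (-a) * Real.exp (-(t x) ^ (-1 / ξ)) := by
    rw [gevDensity, if_pos htx]
    simp only [neg_div, ha, htdef]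
  rw [this]
  rw [Real.rpow_neg htx.le, Real.div_rpow hx.le htx.le, div_eq_mul_inv]
  ring
end

section
/- Let (X, 𝒜, ν) be a measure space and let f, g : X → (0, ∞) be measurable probability densities with respect to ν (∫ f dν = ∫ g dν = 1). Assume g is bounded above by a constant M and that there exist constants 0 < c ≤ C with c·g(x) ≤ f(x) ≤ C·g(x) for all x ∈ X. For α > 0 define the density power divergence d_α(g, f) = ∫ ( f^{1+α} − (1 + 1/α) g f^α + (1/α) g^{1+α} ) dν. Then as α → 0⁺, d_α(g, f) converges to the Kullback–Leibler divergence ∫ g · log(g/f) dν. -/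
open MeasureTheory Real Filter


lemma aux_exp_sub_le {u v : ℝ} (h : u ≤ v) :
    Real.exp v - Real.exp u ≤ (v - u) * Real.exp v := by
  have h1 : (u - v) + 1 ≤ Real.exp (u - v) := Real.add_one_le_exp (u - v)
  have h2 : Real.exp u = Real.exp v * Real.exp (u - v) := by
    rw [← Real.exp_add]; ring_nf
  nlinarith [Real.exp_pos v, Real.exp_pos u]

lemma aux_rpow_sub {p q α : ℝ} (hp : 0 < p) (hα : 0 < α) (hpq : p ≤ q) :
    q ^ α - p ^ α ≤ α * (Real.log q - Real.log p) * q ^ α := by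
  have hq : 0 < q := hp.trans_le hpq
  have hlog : Real.log p ≤ Real.log q := Real.log_le_log hp hpq
  rw [Real.rpow_def_of_pos hp, Real.rpow_def_of_pos hq]
  have h := aux_exp_sub_le (mul_le_mul_of_nonneg_right hlog hα.le :
    Real.log p * α ≤ Real.log q * α)
  calc Real.exp (Real.log q * α) - Real.exp (Real.log p * α)
      ≤ (Real.log q * α - Real.log p * α) * Real.exp (Real.log q * α) := h
    _ = α * (Real.log q - Real.log p) * Real.exp (Real.log q * α) := by ring

lemma aux_abs_rpow_sub {p q α K D : ℝ} (hp : 0 < p) (hq : 0 < q) (hα : 0 < α)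
    (hK : |Real.log q - Real.log p| ≤ K) (hpD : p ^ α ≤ D) (hqD : q ^ α ≤ D) :
    |q ^ α - p ^ α| ≤ α * K * D := by
  have hD : 0 ≤ D := le_trans (Real.rpow_nonneg hp.le α) hpD
  rcases le_total p q with hpq | hqp
  · have hmono : p ^ α ≤ q ^ α := Real.rpow_le_rpow hp.le hpq hα.le
    rw [abs_of_nonneg (by linarith)]
    have h1 := aux_rpow_sub hp hα hpq
    have h2 : Real.log q - Real.log p ≤ K := (le_abs_self _).trans hK
    have h3 : 0 ≤ Real.log q - Real.log p := by
      have := Real.log_le_log hp hpq; linarith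
    calc q ^ α - p ^ α ≤ α * (Real.log q - Real.log p) * (q ^ α) := h1
      _ ≤ α * K * D := by
          apply mul_le_mul (by nlinarith) hqD (Real.rpow_nonneg hq.le α) (by nlinarith)
  · have hmono : q ^ α ≤ p ^ α := Real.rpow_le_rpow hq.le hqp hα.le
    rw [abs_of_nonpos (by linarith), neg_sub]
    have h1 := aux_rpow_sub hq hα hqp
    have h2 : Real.log p - Real.log q ≤ K := by
      rw [abs_sub_comm] at hK; exact (le_abs_self _).trans hK
    have h3 : 0 ≤ Real.log p - Real.log q := by
      have := Real.log_le_log hq hqp; linarith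
    calc p ^ α - q ^ α ≤ α * (Real.log p - Real.log q) * (p ^ α) := h1
      _ ≤ α * K * D := by
          apply mul_le_mul (by nlinarith) hpD (Real.rpow_nonneg hp.le α) (by nlinarith)

lemma aux_rpow_le_D {t α D : ℝ} (ht : 0 < t) (htD : t ≤ D) (hD : 1 ≤ D)
    (hα : 0 < α) (hα1 : α ≤ 1) : t ^ α ≤ D := by
  rcases le_total t 1 with h | h
  · exact (Real.rpow_le_one ht.le h hα.le).trans hD
  · calc t ^ α ≤ t ^ (1 : ℝ) := Real.rpow_le_rpow_of_exponent_le h hα1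
      _ = t := Real.rpow_one t
      _ ≤ D := htD


lemma aux_tendsto {a b : ℝ} (ha : 0 < a) (hb : 0 < b) :
    Tendsto (fun α : ℝ => a ^ (1 + α) - (1 + 1 / α) * b * a ^ α + (1 / α) * b ^ (1 + α))
      (nhdsWithin 0 (Set.Ioi 0)) (nhds ((a - b) + b * Real.log (b / a))) := by
  have hslope : Tendsto (fun α : ℝ => (b ^ α - a ^ α) / α) (nhdsWithin 0 (Set.Ioi 0))
      (nhds (Real.log b - Real.log a)) := by
    have hd : HasDerivAt (fun α : ℝ => Real.exp (Real.log b * α) - Real.exp (Real.log a * α))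
        (Real.log b - Real.log a) 0 := by
      have h1 : HasDerivAt (fun α : ℝ => Real.exp (Real.log b * α)) (Real.log b) 0 := by
        simpa using (((hasDerivAt_id (0:ℝ)).const_mul (Real.log b)).exp)
      have h2 : HasDerivAt (fun α : ℝ => Real.exp (Real.log a * α)) (Real.log a) 0 := by
        simpa using (((hasDerivAt_id (0:ℝ)).const_mul (Real.log a)).exp)
      exact h1.sub h2
    have hs := hasDerivAt_iff_tendsto_slope.mp hd
    have hsub : Set.Ioi (0:ℝ) ⊆ {(0:ℝ)}ᶜ := fun x hx => ne_of_gt hx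
    refine Tendsto.congr' ?_ (hs.mono_left (nhdsWithin_mono _ hsub))
    filter_upwards [self_mem_nhdsWithin] with α (hα : (0:ℝ) < α)
    rw [slope_def_field]
    simp only [Real.rpow_def_of_pos ha, Real.rpow_def_of_pos hb, mul_zero, Real.exp_zero, sub_self, sub_zero]
  have hA : Tendsto (fun α : ℝ => a ^ (1 + α)) (nhdsWithin 0 (Set.Ioi 0)) (nhds a) := by
    have hcont : Continuous fun α : ℝ => Real.exp (Real.log a * (1 + α)) := by continuity
    have h0 : Tendsto (fun α : ℝ => Real.exp (Real.log a * (1 + α))) (nhds 0)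
        (nhds a) := by
      have := hcont.tendsto 0
      simpa [Real.exp_log ha] using this
    refine Tendsto.congr (fun α => ?_) (h0.mono_left nhdsWithin_le_nhds)
    rw [Real.rpow_def_of_pos ha]
  have hB : Tendsto (fun α : ℝ => b * a ^ α) (nhdsWithin 0 (Set.Ioi 0)) (nhds b) := by
    have hcont : Continuous fun α : ℝ => b * Real.exp (Real.log a * α) := by continuity
    have h0 : Tendsto (fun α : ℝ => b * Real.exp (Real.log a * α)) (nhds 0) (nhds b) := by
      have := hcont.tendsto 0
      simpa using this
    refine Tendsto.congr (fun α => ?_) (h0.mono_left nhdsWithin_le_nhds)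
    rw [Real.rpow_def_of_pos ha]
  have hcomb := (hA.sub hB).add (tendsto_const_nhds.mul hslope : Tendsto
    (fun α : ℝ => b * ((b ^ α - a ^ α) / α)) (nhdsWithin 0 (Set.Ioi 0))
    (nhds (b * (Real.log b - Real.log a))))
  have heq : (a - b) + b * Real.log (b / a) = (a - b) + b * (Real.log b - Real.log a) := by
    rw [Real.log_div hb.ne' ha.ne']
  rw [heq]
  refine Tendsto.congr' ?_ hcomb
  filter_upwards [self_mem_nhdsWithin] with α (hα : (0:ℝ) < α)
  have h1 : a ^ (1 + α) = a * a ^ α := by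
    rw [Real.rpow_add ha, Real.rpow_one]
  have h2 : b ^ (1 + α) = b * b ^ α := by
    rw [Real.rpow_add hb, Real.rpow_one]
  rw [h1, h2]
  field_simp [h1, h2]
  ring

/-- Let `f, g` be strictly positive measurable probability densities on a measure space
`(X, 𝒜, ν)`, with `g` bounded above by `M` and `c g ≤ f ≤ C g` for constants
`0 < c ≤ C`. Then as `α → 0⁺`, the density power divergence
`d_α(g, f) = ∫ (f^{1+α} - (1 + 1/α) g f^α + (1/α) g^{1+α}) dν` converges to the
Kullback–Leibler divergence `∫ g log(g/f) dν`. -/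
theorem stmt_19 {X : Type*} [MeasurableSpace X] (ν : Measure X)
    (f g : X → ℝ) (hf : Measurable f) (hg : Measurable g)
    (hfpos : ∀ x, 0 < f x) (hgpos : ∀ x, 0 < g x)
    (hfint : ∫ x, f x ∂ν = 1) (hgint : ∫ x, g x ∂ν = 1)
    (M : ℝ) (hM : ∀ x, g x ≤ M)
    (c C : ℝ) (hc : 0 < c) (hcC : c ≤ C)
    (hlow : ∀ x, c * g x ≤ f x) (hup : ∀ x, f x ≤ C * g x) :
    Tendsto
      (fun α : ℝ =>
        ∫ x, (f x ^ (1 + α) - (1 + 1 / α) * g x * f x ^ α + (1 / α) * g x ^ (1 + α)) ∂ν)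
      (nhdsWithin 0 (Set.Ioi 0))
      (nhds (∫ x, g x * Real.log (g x / f x) ∂ν)) := by
  have hC : 0 < C := hc.trans_le hcC
  have hIf : Integrable f ν := by
    by_contra h; rw [integral_undef h] at hfint; norm_num at hfint
  have hIg : Integrable g ν := by
    by_contra h; rw [integral_undef h] at hgint; norm_num at hgint
  have hfrpow : ∀ y : ℝ, Measurable (fun x => f x ^ y) := by
    intro y
    have : (fun x => f x ^ y) = fun x => Real.exp (Real.log (f x) * y) :=
      funext fun x => Real.rpow_def_of_pos (hfpos x) y
    rw [this]; exact (hf.log.mul measurable_const).exp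
  have hgrpow : ∀ y : ℝ, Measurable (fun x => g x ^ y) := by
    intro y
    have : (fun x => g x ^ y) = fun x => Real.exp (Real.log (g x) * y) :=
      funext fun x => Real.rpow_def_of_pos (hgpos x) y
    rw [this]; exact (hg.log.mul measurable_const).exp
  set K : ℝ := |Real.log c| + |Real.log C| with hKdef
  have hK0 : 0 ≤ K := add_nonneg (abs_nonneg _) (abs_nonneg _)
  have hlogbd : ∀ x, |Real.log (g x) - Real.log (f x)| ≤ K := by
    intro x
    have h1 : Real.log c + Real.log (g x) ≤ Real.log (f x) := by
      rw [← Real.log_mul hc.ne' (hgpos x).ne']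
      exact Real.log_le_log (mul_pos hc (hgpos x)) (hlow x)
    have h2 : Real.log (f x) ≤ Real.log C + Real.log (g x) := by
      rw [← Real.log_mul hC.ne' (hgpos x).ne']
      exact Real.log_le_log (hfpos x) (hup x)
    have hac := neg_abs_le (Real.log c)
    have hbc := le_abs_self (Real.log C)
    have hac' := le_abs_self (Real.log c)
    have hbc' := neg_abs_le (Real.log C)
    rw [abs_le]; constructor <;> [skip; skip] <;>
      simp only [hKdef] <;> linarith
  set D : ℝ := max 1 (max (C * M) M) with hDdef
  have hD1 : (1:ℝ) ≤ D := le_max_left _ _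
  have hD0 : (0:ℝ) ≤ D := by linarith
  have hfD : ∀ x, f x ≤ D := fun x =>
    le_trans (le_trans (hup x) (mul_le_mul_of_nonneg_left (hM x) hC.le))
      (le_trans (le_max_left _ _) (le_max_right _ _))
  have hgD : ∀ x, g x ≤ D := fun x =>
    le_trans (hM x) (le_trans (le_max_right _ _) (le_max_right _ _))
  have hKLmeas : AEStronglyMeasurable (fun x => g x * Real.log (g x / f x)) ν :=
    (hg.mul ((hg.div hf).log)).aestronglyMeasurable
  have hKLbd : ∀ x, ‖g x * Real.log (g x / f x)‖ ≤ K * g x := by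
    intro x
    rw [Real.norm_eq_abs, abs_mul, abs_of_pos (hgpos x),
      Real.log_div (hgpos x).ne' (hfpos x).ne']
    have := mul_le_mul_of_nonneg_left (hlogbd x) (hgpos x).le
    linarith [this]
  have hIKL : Integrable (fun x => g x * Real.log (g x / f x)) ν :=
    Integrable.mono' (hIg.const_mul K) hKLmeas (Filter.Eventually.of_forall hKLbd)
  set bound : X → ℝ := fun x => D * (f x + g x) + K * D * g x with hbdef
  have hIbound : Integrable bound ν :=
    ((hIf.add hIg).const_mul D).add (hIg.const_mul (K * D))
  have hmeas : ∀ᶠ α : ℝ in nhdsWithin 0 (Set.Ioi 0), AEStronglyMeasurable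
      (fun x => f x ^ (1 + α) - (1 + 1 / α) * g x * f x ^ α + (1 / α) * g x ^ (1 + α)) ν := by
    refine Filter.Eventually.of_forall fun α => ?_
    exact (((hfrpow (1 + α)).sub
      ((measurable_const.mul hg).mul (hfrpow α))).add
      (measurable_const.mul (hgrpow (1 + α)))).aestronglyMeasurable
  have hIoc : Set.Ioc (0:ℝ) 1 ∈ nhdsWithin 0 (Set.Ioi 0) := by
    refine mem_nhdsWithin.mpr ⟨Set.Iio 1, isOpen_Iio, by norm_num, ?_⟩
    intro x hx
    exact ⟨hx.2, le_of_lt hx.1⟩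
  have hbound : ∀ᶠ α : ℝ in nhdsWithin 0 (Set.Ioi 0), ∀ᵐ x ∂ν,
      ‖f x ^ (1 + α) - (1 + 1 / α) * g x * f x ^ α + (1 / α) * g x ^ (1 + α)‖ ≤ bound x := by
    filter_upwards [hIoc] with α hα
    refine Filter.Eventually.of_forall fun x => ?_
    obtain ⟨hα0, hα1⟩ := hα
    have ha := hfpos x; have hb := hgpos x
    have haD : f x ^ α ≤ D := aux_rpow_le_D ha (hfD x) hD1 hα0 hα1
    have hbD : g x ^ α ≤ D := aux_rpow_le_D hb (hgD x) hD1 hα0 hα1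
    have hid : f x ^ (1 + α) - (1 + 1 / α) * g x * f x ^ α + (1 / α) * g x ^ (1 + α)
        = f x ^ α * (f x - g x) + g x * ((g x ^ α - f x ^ α) / α) := by
      rw [Real.rpow_add ha, Real.rpow_add hb, Real.rpow_one, Real.rpow_one]
      field_simp
      ring
    rw [hid, Real.norm_eq_abs]
    have hfa0 : (0:ℝ) ≤ f x ^ α := Real.rpow_nonneg ha.le α
    have hT1 : |f x ^ α * (f x - g x)| ≤ D * (f x + g x) := by
      rw [abs_mul, abs_of_nonneg hfa0]
      have habs : |f x - g x| ≤ f x + g x := by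
        rw [abs_le]; constructor <;> linarith
      exact mul_le_mul haD habs (abs_nonneg _) hD0
    have hT2 : |g x * ((g x ^ α - f x ^ α) / α)| ≤ K * D * g x := by
      rw [abs_mul, abs_of_pos hb, abs_div, abs_of_pos hα0]
      have h := aux_abs_rpow_sub ha hb hα0 (hlogbd x) haD hbD
      have hdiv : |g x ^ α - f x ^ α| / α ≤ K * D := by
        rw [div_le_iff₀ hα0]
        calc |g x ^ α - f x ^ α| ≤ α * K * D := h
          _ = K * D * α := by ring
      have := mul_le_mul_of_nonneg_left hdiv hb.le
      linarith
    have habsadd := abs_add_le (f x ^ α * (f x - g x)) (g x * ((g x ^ α - f x ^ α) / α))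
    have : bound x = D * (f x + g x) + K * D * g x := rfl
    rw [this]
    linarith
  have hlim : ∀ᵐ x ∂ν, Tendsto
      (fun α : ℝ => f x ^ (1 + α) - (1 + 1 / α) * g x * f x ^ α + (1 / α) * g x ^ (1 + α))
      (nhdsWithin 0 (Set.Ioi 0)) (nhds ((f x - g x) + g x * Real.log (g x / f x))) :=
    Filter.Eventually.of_forall fun x => aux_tendsto (hfpos x) (hgpos x)
  have main := tendsto_integral_filter_of_dominated_convergence bound hmeas hbound hIbound hlim
  have heq : ∫ x, ((f x - g x) + g x * Real.log (g x / f x)) ∂ν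
      = ∫ x, g x * Real.log (g x / f x) ∂ν := by
    have h1 : ∫ x, ((f x - g x) + g x * Real.log (g x / f x)) ∂ν
        = (∫ x, (f x - g x) ∂ν) + ∫ x, g x * Real.log (g x / f x) ∂ν :=
      integral_add (hIf.sub hIg) hIKL
    have h2 : ∫ x, (f x - g x) ∂ν = 0 := by
      rw [integral_sub hIf hIg, hfint, hgint]; ring
    rw [h1, h2, zero_add]
  rw [← heq]
  exact main
end
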